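/- The set A_{−3/√20} consists of exactly 5 points, namely the coordinate permutations of the point (1/√20, 1/√20, 1/√20, 1/√20, −4/√20); likewise A_{3/√20} consists of exactly the 5 coordinate permutations of (−1/√20, −1/√20, −1/√20, −1/√20, 4/√20). -/

import Mathlib

noncomputable section

/-- Power sum `p_k(x) = x₁^k + ⋯ + x₅^k` on `ℝ⁵`. -/
def p (k : ℕ) (x : Fin 5 → ℝ) : ℝ := ∑ i, x i ^ k

/-- The surface `A_C = {x ∈ ℝ⁵ : p₁(x) = 0, p₂(x) = 1, p₃(x) = C}`. -/
def A (C : ℝ) : Set (Fin 5 → ℝ) := {x | p 1 x = 0 ∧ p 2 x = 1 ∧ p 3 x = C}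

/-- The gradient of `p_k`: `∇p_k(x) = (k x₁^{k-1}, …, k x₅^{k-1})`. -/
def grad (k : ℕ) (x : Fin 5 → ℝ) : Fin 5 → ℝ := fun i => (k : ℝ) * x i ^ (k - 1)

/-- The set of coordinate permutations of a point `x₀ ∈ ℝ⁵`. -/
def perms (x₀ : Fin 5 → ℝ) : Set (Fin 5 → ℝ) := {x | ∃ σ : Equiv.Perm (Fin 5), x = x₀ ∘ σ}

/-! ### Auxiliary lemmas -/

lemma bd5 (x y z w u : ℝ) (p1 : x+y+z+w+u = 0) (p2 : x^2+y^2+z^2+w^2+u^2 = 20) :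
    x ≤ 4 := by
  nlinarith [sq_nonneg (y-z), sq_nonneg (y-w), sq_nonneg (y-u), sq_nonneg (z-w),
    sq_nonneg (z-u), sq_nonneg (w-u), sq_nonneg (x-4), sq_nonneg (x+4)]

lemma key5 (a b c d e : ℝ) (h1 : a+b+c+d+e = 0)
    (h2 : a^2+b^2+c^2+d^2+e^2 = 20) (h3 : a^3+b^3+c^3+d^3+e^3 = 60) :
    (a = 4 ∧ b = -1 ∧ c = -1 ∧ d = -1 ∧ e = -1) ∨
    (a = -1 ∧ b = 4 ∧ c = -1 ∧ d = -1 ∧ e = -1) ∨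
    (a = -1 ∧ b = -1 ∧ c = 4 ∧ d = -1 ∧ e = -1) ∨
    (a = -1 ∧ b = -1 ∧ c = -1 ∧ d = 4 ∧ e = -1) ∨
    (a = -1 ∧ b = -1 ∧ c = -1 ∧ d = -1 ∧ e = 4) := by
  have ha := bd5 a b c d e h1 h2
  have hb := bd5 b a c d e (by linarith) (by linarith)
  have hc := bd5 c a b d e (by linarith) (by linarith)
  have hd := bd5 d a b c e (by linarith) (by linarith)
  have he := bd5 e a b c d (by linarith) (by linarith)
  have Ta : 0 ≤ (a+1)^2*(4-a) := mul_nonneg (sq_nonneg _) (by linarith)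
  have Tb : 0 ≤ (b+1)^2*(4-b) := mul_nonneg (sq_nonneg _) (by linarith)
  have Tc : 0 ≤ (c+1)^2*(4-c) := mul_nonneg (sq_nonneg _) (by linarith)
  have Td : 0 ≤ (d+1)^2*(4-d) := mul_nonneg (sq_nonneg _) (by linarith)
  have Te : 0 ≤ (e+1)^2*(4-e) := mul_nonneg (sq_nonneg _) (by linarith)
  have hsum : (a+1)^2*(4-a) + (b+1)^2*(4-b) + (c+1)^2*(4-c) + (d+1)^2*(4-d)
      + (e+1)^2*(4-e) = 0 := by linear_combination (-1)*h3 + 2*h2 + 7*h1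
  have two : (2:ℕ) ≠ 0 := by norm_num
  have fa : a = -1 ∨ a = 4 := by
    rcases mul_eq_zero.mp (by linarith : (a+1)^2*(4-a) = 0) with h | h
    · left; have := pow_eq_zero_iff two |>.mp h; linarith
    · right; linarith
  have fb : b = -1 ∨ b = 4 := by
    rcases mul_eq_zero.mp (by linarith : (b+1)^2*(4-b) = 0) with h | h
    · left; have := pow_eq_zero_iff two |>.mp h; linarith
    · right; linarith
  have fc : c = -1 ∨ c = 4 := by
    rcases mul_eq_zero.mp (by linarith : (c+1)^2*(4-c) = 0) with h | h
    · left; have := pow_eq_zero_iff two |>.mp h; linarith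
    · right; linarith
  have fd : d = -1 ∨ d = 4 := by
    rcases mul_eq_zero.mp (by linarith : (d+1)^2*(4-d) = 0) with h | h
    · left; have := pow_eq_zero_iff two |>.mp h; linarith
    · right; linarith
  have fe : e = -1 ∨ e = 4 := by
    rcases mul_eq_zero.mp (by linarith : (e+1)^2*(4-e) = 0) with h | h
    · left; have := pow_eq_zero_iff two |>.mp h; linarith
    · right; linarith
  rcases fa with fa | fa <;> rcases fb with fb | fb <;> rcases fc with fc | fc <;>
    rcases fd with fd | fd <;> rcases fe with fe | fe <;> subst_vars <;> revert h1 <;> norm_num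

/-- one `4/√20` at position `j`, rest `-(1/√20)`. -/
def fpos (j : Fin 5) : Fin 5 → ℝ := fun i => if i = j then 4 / Real.sqrt 20 else -(1 / Real.sqrt 20)

/-- one `-(4/√20)` at position `j`, rest `1/√20`. -/
def fneg (j : Fin 5) : Fin 5 → ℝ := fun i => if i = j then -(4 / Real.sqrt 20) else 1 / Real.sqrt 20

lemma hv : Real.sqrt 20 ^ 2 = 20 := Real.sq_sqrt (by norm_num)
lemma hv0 : (0:ℝ) < Real.sqrt 20 := Real.sqrt_pos.mpr (by norm_num)
lemma hvne : Real.sqrt 20 ≠ 0 := ne_of_gt hv0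

lemma eq_fpos (x : Fin 5 → ℝ) (j : Fin 5)
    (h : ∀ i, Real.sqrt 20 * x i = if i = j then 4 else -1) : x = fpos j := by
  funext i
  have hi := h i
  unfold fpos
  by_cases hij : i = j
  · simp only [if_pos hij] at hi ⊢
    field_simp
    linear_combination hi
  · simp only [if_neg hij] at hi ⊢
    field_simp
    linear_combination hi

lemma Apos_sub : A (3 / Real.sqrt 20) ⊆ Set.range fpos := by
  intro x hx
  set v := Real.sqrt 20 with hvdef
  obtain ⟨h1, h2, h3⟩ := hx
  simp only [p, Fin.sum_univ_five, pow_one] at h1 h2 h3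
  have h3' : (x 0 ^ 3 + x 1 ^ 3 + x 2 ^ 3 + x 3 ^ 3 + x 4 ^ 3) * v = 3 := by
    rw [h3]; field_simp
    exact div_self hvne
  have K := key5 (v * x 0) (v * x 1) (v * x 2) (v * x 3) (v * x 4)
    (by linear_combination v * h1)
    (by linear_combination v^2 * h2 + hv)
    (by linear_combination v^2 * h3' + 3 * hv)
  rcases K with ⟨E0,E1,E2,E3,E4⟩ | ⟨E0,E1,E2,E3,E4⟩ | ⟨E0,E1,E2,E3,E4⟩ |
    ⟨E0,E1,E2,E3,E4⟩ | ⟨E0,E1,E2,E3,E4⟩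
  · exact ⟨0, (eq_fpos x 0 (by intro i; fin_cases i <;> norm_num <;> assumption)).symm⟩
  · exact ⟨1, (eq_fpos x 1 (by intro i; fin_cases i <;> norm_num <;> assumption)).symm⟩
  · exact ⟨2, (eq_fpos x 2 (by intro i; fin_cases i <;> norm_num <;> assumption)).symm⟩
  · exact ⟨3, (eq_fpos x 3 (by intro i; fin_cases i <;> norm_num <;> assumption)).symm⟩
  · exact ⟨4, (eq_fpos x 4 (by intro i; fin_cases i <;> norm_num <;> assumption)).symm⟩

lemma sum_ite5 (a b : ℝ) (j : Fin 5) :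
    ∑ i : Fin 5, (if i = j then a else b) = a + 4 * b := by
  have h : ∀ i : Fin 5, (if i = j then a else b) = b + (if i = j then a - b else 0) := by
    intro i; split <;> ring
  simp only [h, Finset.sum_add_distrib, Finset.sum_const, Finset.sum_ite_eq' Finset.univ j,
    Finset.mem_univ, if_pos]
  simp
  ring

lemma p_fpos (k : ℕ) (j : Fin 5) :
    p k (fpos j) = (4 / Real.sqrt 20) ^ k + 4 * (-(1 / Real.sqrt 20)) ^ k := by
  unfold p fpos
  rw [← sum_ite5 ((4 / Real.sqrt 20) ^ k) ((-(1 / Real.sqrt 20)) ^ k) j]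
  refine Finset.sum_congr rfl fun i _ => ?_
  split <;> rfl

lemma fpos_mem (j : Fin 5) : fpos j ∈ A (3 / Real.sqrt 20) := by
  refine ⟨?_, ?_, ?_⟩ <;> rw [p_fpos]
  · ring
  · rw [div_pow, neg_pow, div_pow, hv]; norm_num
  · have hv3 : Real.sqrt 20 ^ 3 = 20 * Real.sqrt 20 := by rw [pow_succ, hv]
    rw [div_pow, neg_pow, div_pow, hv3]
    field_simp
    ring

lemma Apos_eq : A (3 / Real.sqrt 20) = Set.range fpos :=
  Set.Subset.antisymm Apos_sub (by rintro x ⟨j, rfl⟩; exact fpos_mem j)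

lemma perms_pos :
    perms ![-(1 / Real.sqrt 20), -(1 / Real.sqrt 20), -(1 / Real.sqrt 20), -(1 / Real.sqrt 20),
      4 / Real.sqrt 20] = Set.range fpos := by
  set x₀ : Fin 5 → ℝ := ![-(1 / Real.sqrt 20), -(1 / Real.sqrt 20), -(1 / Real.sqrt 20),
    -(1 / Real.sqrt 20), 4 / Real.sqrt 20] with hx₀
  have hx : ∀ k : Fin 5, x₀ k = if k = 4 then 4 / Real.sqrt 20 else -(1 / Real.sqrt 20) := by
    intro k; fin_cases k <;> simp (config := { decide := true }) [hx₀, one_div]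
  ext x
  constructor
  · rintro ⟨σ, rfl⟩
    refine ⟨σ.symm 4, ?_⟩
    funext i
    show fpos (σ.symm 4) i = x₀ (σ i)
    rw [hx (σ i)]
    unfold fpos
    by_cases h : σ i = 4
    · rw [if_pos h, if_pos ((Equiv.eq_symm_apply σ).mpr h)]
    · rw [if_neg h, if_neg (fun hh => h ((Equiv.eq_symm_apply σ).mp hh))]
  · rintro ⟨j, rfl⟩
    refine ⟨Equiv.swap j 4, ?_⟩
    funext i
    show fpos j i = x₀ (Equiv.swap j 4 i)
    rw [hx (Equiv.swap j 4 i)]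
    unfold fpos
    have hiff : Equiv.swap j 4 i = 4 ↔ i = j := by
      constructor
      · intro h
        have h2 := congrArg (Equiv.swap j 4) h
        rwa [Equiv.swap_apply_self, Equiv.swap_apply_right] at h2
      · intro hij
        rw [hij]
        exact Equiv.swap_apply_left j 4
    by_cases h : i = j
    · rw [if_pos h, if_pos (hiff.mpr h)]
    · rw [if_neg h, if_neg (fun hh => h (hiff.mp hh))]

lemma fpos_inj : Function.Injective fpos := by
  intro j j' h
  by_contra hne
  have hc := congrFun h j
  unfold fpos at hc
  rw [if_pos rfl, if_neg hne] at hc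
  field_simp at hc
  norm_num at hc

lemma ncard_fpos : (Set.range fpos).ncard = 5 := by
  rw [← Set.image_univ, Set.ncard_image_of_injective _ fpos_inj, Set.ncard_univ]
  simp

/-! ### Negative side via `x ↦ -x` -/

lemma fneg_eq (j : Fin 5) : fneg j = -fpos j := by
  funext i
  by_cases h : i = j <;> simp [fneg, fpos, h]

lemma Aneg_eq : A (-(3 / Real.sqrt 20)) = Set.range fneg := by
  ext x
  have hmem : x ∈ A (-(3 / Real.sqrt 20)) ↔ (-x) ∈ A (3 / Real.sqrt 20) := by
    simp only [A, Set.mem_setOf_eq, p, Fin.sum_univ_five, Pi.neg_apply]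
    constructor <;> rintro ⟨u1, u2, u3⟩ <;>
      exact ⟨by linear_combination -u1, by linear_combination u2, by linear_combination -u3⟩
  rw [hmem, Apos_eq]
  constructor
  · rintro ⟨j, hj⟩
    exact ⟨j, by rw [fneg_eq, hj, neg_neg]⟩
  · rintro ⟨j, rfl⟩
    exact ⟨j, by rw [fneg_eq, neg_neg]⟩

lemma perms_neg :
    perms ![1 / Real.sqrt 20, 1 / Real.sqrt 20, 1 / Real.sqrt 20, 1 / Real.sqrt 20,
      -(4 / Real.sqrt 20)] = Set.range fneg := by
  set x₀ : Fin 5 → ℝ := ![1 / Real.sqrt 20, 1 / Real.sqrt 20, 1 / Real.sqrt 20,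
    1 / Real.sqrt 20, -(4 / Real.sqrt 20)] with hx₀
  have hx : ∀ k : Fin 5, x₀ k = if k = 4 then -(4 / Real.sqrt 20) else 1 / Real.sqrt 20 := by
    intro k; fin_cases k <;> simp (config := { decide := true }) [hx₀, one_div]
  ext x
  constructor
  · rintro ⟨σ, rfl⟩
    refine ⟨σ.symm 4, ?_⟩
    funext i
    show fneg (σ.symm 4) i = x₀ (σ i)
    rw [hx (σ i)]
    unfold fneg
    by_cases h : σ i = 4
    · rw [if_pos h, if_pos ((Equiv.eq_symm_apply σ).mpr h)]
    · rw [if_neg h, if_neg (fun hh => h ((Equiv.eq_symm_apply σ).mp hh))]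
  · rintro ⟨j, rfl⟩
    refine ⟨Equiv.swap j 4, ?_⟩
    funext i
    show fneg j i = x₀ (Equiv.swap j 4 i)
    rw [hx (Equiv.swap j 4 i)]
    unfold fneg
    have hiff : Equiv.swap j 4 i = 4 ↔ i = j := by
      constructor
      · intro h
        have h2 := congrArg (Equiv.swap j 4) h
        rwa [Equiv.swap_apply_self, Equiv.swap_apply_right] at h2
      · intro hij
        rw [hij]
        exact Equiv.swap_apply_left j 4
    by_cases h : i = j
    · rw [if_pos h, if_pos (hiff.mpr h)]
    · rw [if_neg h, if_neg (fun hh => h (hiff.mp hh))]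

lemma fneg_inj : Function.Injective fneg := by
  intro j j' h
  have : fpos j = fpos j' := by
    have := congrArg Neg.neg (fneg_eq j ▸ fneg_eq j' ▸ h)
    simpa using this
  exact fpos_inj this

lemma ncard_fneg : (Set.range fneg).ncard = 5 := by
  rw [← Set.image_univ, Set.ncard_image_of_injective _ fneg_inj, Set.ncard_univ]
  simp

/-- `A_{-3/√20}` consists of exactly the 5 coordinate permutations of
`(1/√20, 1/√20, 1/√20, 1/√20, -4/√20)`, and `A_{3/√20}` of the 5 permutations of
`(-1/√20, -1/√20, -1/√20, -1/√20, 4/√20)`. -/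
theorem stmt_2 :
    (A (-(3 / Real.sqrt 20)) =
        perms ![1 / Real.sqrt 20, 1 / Real.sqrt 20, 1 / Real.sqrt 20, 1 / Real.sqrt 20,
          -(4 / Real.sqrt 20)] ∧
      (A (-(3 / Real.sqrt 20))).ncard = 5) ∧
    (A (3 / Real.sqrt 20) =
        perms ![-(1 / Real.sqrt 20), -(1 / Real.sqrt 20), -(1 / Real.sqrt 20), -(1 / Real.sqrt 20),
          4 / Real.sqrt 20] ∧
      (A (3 / Real.sqrt 20)).ncard = 5) := by
  refine ⟨⟨?_, ?_⟩, ?_, ?_⟩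
  · rw [Aneg_eq, perms_neg]
  · rw [Aneg_eq, ncard_fneg]
  · rw [Apos_eq, perms_pos]
  · rw [Apos_eq, ncard_fpos]
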